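/- The multiple polylogarithm map is an algebra morphism for the shuffle product: for all semiconvergent words w, w' in the alphabet {x,y} and every z ∈ [0,1), Li_{w ⧢ w'}(z) = Li_w(z)·Li_{w'}(z), where Li is extended linearly (the shuffle of two semiconvergent words is a linear combination of semiconvergent words). -/

import Mathlib

/-! ### Words and shuffle products -/

/-- `𝓦_Ω`: the free `ℝ`-vector space on words written in the alphabet `Ω`. -/
abbrev WAlg (Ω : Type) := List Ω →₀ ℝ

/-- The basis element of `𝓦_Ω` corresponding to a word. -/
noncomputable def wdelta {Ω : Type} (w : List Ω) : WAlg Ω := Finsupp.single w 1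

/-- The `λ`-shuffle product of two words with respect to the (semigroup) product `mul`
on `Ω`, as an element of `𝓦_Ω`.  For `lam = 1` this is the stuffle product, for
`lam = -1` the anti-stuffle product and for `lam = 0` the usual shuffle product. -/
noncomputable def shw {Ω : Type} (mul : Ω → Ω → Ω) (lam : ℝ) : List Ω → List Ω → WAlg Ω
  | [], w => wdelta w
  | a :: u, [] => wdelta (a :: u)
  | a :: u, b :: v =>
      Finsupp.mapDomain (a :: ·) (shw mul lam u (b :: v)) +
      Finsupp.mapDomain (b :: ·) (shw mul lam (a :: u) v) +
      lam • Finsupp.mapDomain (mul a b :: ·) (shw mul lam u v)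
termination_by w₁ w₂ => w₁.length + w₂.length
decreasing_by all_goals (simp; try omega)

/-! ### The alphabet `{x,y}`, iterated integrals and polylogarithms -/

/-- The two-letter alphabet `{x, y}`. -/
inductive XY : Type where
  | x : XY
  | y : XY
deriving DecidableEq

/-- `σ_x(t) = 1/t` and `σ_y(t) = 1/(1-t)`. -/
noncomputable def sigmaXY : XY → ℝ → ℝ
  | .x => fun t => 1 / t
  | .y => fun t => 1 / (1 - t)

/-- The Chen iterated integral `Ch(w)` of a word of functions, with basepoint `a`:
`Ch(∅) = 1` and `Ch((f)⊔w)(x) = ∫_a^x f(t)·Ch(w)(t) dt`. -/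
noncomputable def chenL (a : ℝ) : List (ℝ → ℝ) → ℝ → ℝ
  | [] => fun _ => 1
  | f :: fs => fun x => ∫ t in a..x, f t * chenL a fs t

/-- A word in `{x,y}` is semiconvergent if it is empty or ends with `y`. -/
def SemiWordXY (w : List XY) : Prop := ∀ a, w.getLast? = some a → a = XY.y

/-- A word in `{x,y}` is convergent if it is empty, or ends with `y` and starts with `x`. -/
def ConvWordXY (w : List XY) : Prop :=
  SemiWordXY w ∧ ∀ a, w.head? = some a → a = XY.x

/-- The single variable multiple polylogarithm of a word in `{x,y}`:
for `z ∈ (0,1)` the limit as `ε → 0⁺` of the iterated (Chen) integral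
`∫_{z ≥ t₁ ≥ ⋯ ≥ t_k ≥ ε} ∏ ω_{εᵢ}(tᵢ)`, with `Li_∅ ≡ 1` and `Li_w(0) = 0` for `w ≠ ∅`. -/
noncomputable def LiW (w : List XY) (z : ℝ) : ℝ :=
  if w = [] then 1
  else if z = 0 then 0
  else Filter.limUnder (nhdsWithin 0 (Set.Ioi 0)) fun ε => chenL ε (w.map sigmaXY) z

/-- The shuffle multiple zeta value of a (convergent) word: `ζ_⧢(w) = lim_{z→1⁻} Li_w(z)`. -/
noncomputable def zetaShW (w : List XY) : ℝ := Filter.limUnder (nhdsWithin 1 (Set.Iio 1)) (LiW w)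

/-- The linear extension of `Li` to the span of words. -/
noncomputable def LiWAlg (x : WAlg XY) (z : ℝ) : ℝ := x.sum fun w c => c • LiW w z

section StatementTwelveAux

open Set MeasureTheory intervalIntegral Filter Topology

lemma sigma_pos (a : XY) {t : ℝ} (ht : t ∈ Ioo (0:ℝ) 1) : 0 < sigmaXY a t := by
  cases a <;> simp [sigmaXY] <;> [exact ht.1; linarith [ht.2]]

lemma sigma_contOn (a : XY) : ContinuousOn (sigmaXY a) (Ioo (0:ℝ) 1) := by
  cases a <;> simp only [sigmaXY]
  · exact continuousOn_const.div continuousOn_id (fun t ht => ne_of_gt ht.1)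
  · exact continuousOn_const.div (continuousOn_const.sub continuousOn_id)
      (fun t ht => by simp; intro h; linarith [ht.2, h])

lemma uIcc_subset_I01 {ε s : ℝ} (hε : ε ∈ Ioo (0:ℝ) 1) (hs : s ∈ Ioo (0:ℝ) 1) :
    Set.uIcc ε s ⊆ Ioo (0:ℝ) 1 :=
  Set.OrdConnected.uIcc_subset Set.ordConnected_Ioo hε hs

/-- FTC helper. -/
lemma primitive_hasDerivAt {ε : ℝ} (hε : ε ∈ Ioo (0:ℝ) 1) {g : ℝ → ℝ}
    (hg : ContinuousOn g (Ioo (0:ℝ) 1)) {s : ℝ} (hs : s ∈ Ioo (0:ℝ) 1) :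
    HasDerivAt (fun x => ∫ t in ε..x, g t) (g s) s := by
  refine integral_hasDerivAt_right ?_ ?_ ?_
  · exact (hg.mono (uIcc_subset_I01 hε hs)).intervalIntegrable
  · exact hg.stronglyMeasurableAtFilter isOpen_Ioo s hs
  · exact hg.continuousAt (isOpen_Ioo.mem_nhds hs)

lemma chen_contOn (w : List XY) {ε : ℝ} (hε : ε ∈ Ioo (0:ℝ) 1) :
    ContinuousOn (chenL ε (w.map sigmaXY)) (Ioo (0:ℝ) 1) := by
  induction w with
  | nil => simpa [chenL] using continuousOn_const
  | cons a w IH =>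
      intro s hs
      have hg : ContinuousOn (fun t => sigmaXY a t * chenL ε (w.map sigmaXY) t)
          (Ioo (0:ℝ) 1) := (sigma_contOn a).mul IH
      exact ((primitive_hasDerivAt hε hg hs).continuousAt).continuousWithinAt

lemma chen_hasDerivAt (a : XY) (w : List XY) {ε s : ℝ} (hε : ε ∈ Ioo (0:ℝ) 1)
    (hs : s ∈ Ioo (0:ℝ) 1) :
    HasDerivAt (chenL ε ((a :: w).map sigmaXY))
      (sigmaXY a s * chenL ε (w.map sigmaXY) s) s :=
  primitive_hasDerivAt hε ((sigma_contOn a).mul (chen_contOn w hε)) hs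

lemma chen_self (f : ℝ → ℝ) (fs : List (ℝ → ℝ)) (ε : ℝ) : chenL ε (f :: fs) ε = 0 := by
  simp [chenL]
lemma chen_nonneg (w : List XY) : ∀ {ε s : ℝ}, ε ∈ Ioo (0:ℝ) 1 → ε ≤ s → s < 1 →
    0 ≤ chenL ε (w.map sigmaXY) s := by
  induction w with
  | nil => intro ε s _ _ _; simp [chenL]
  | cons a w IH =>
      intro ε s hε hεs hs1
      have hsI : s ∈ Ioo (0:ℝ) 1 := ⟨lt_of_lt_of_le hε.1 hεs, hs1⟩
      show 0 ≤ ∫ t in ε..s, sigmaXY a t * chenL ε (w.map sigmaXY) t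
      refine intervalIntegral.integral_nonneg hεs (fun u hu => ?_)
      have huI : u ∈ Ioo (0:ℝ) 1 := ⟨lt_of_lt_of_le hε.1 hu.1, lt_of_le_of_lt hu.2 hs1⟩
      exact mul_nonneg (sigma_pos a huI).le (IH hε hu.1 huI.2)

lemma chen_antitone (w : List XY) : ∀ {ε ε' s : ℝ}, ε' ∈ Ioo (0:ℝ) 1 → ε' ≤ ε → ε ≤ s →
    s < 1 → chenL ε (w.map sigmaXY) s ≤ chenL ε' (w.map sigmaXY) s := by
  induction w with
  | nil => intro ε ε' s _ _ _ _; simp [chenL]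
  | cons a w IH =>
      intro ε ε' s hε' hεε hεs hs1
      have hε : ε ∈ Ioo (0:ℝ) 1 := ⟨lt_of_lt_of_le hε'.1 hεε, lt_of_le_of_lt hεs hs1⟩
      have hsI : s ∈ Ioo (0:ℝ) 1 := ⟨lt_of_lt_of_le hε.1 hεs, hs1⟩
      show (∫ t in ε..s, sigmaXY a t * chenL ε (w.map sigmaXY) t) ≤
        ∫ t in ε'..s, sigmaXY a t * chenL ε' (w.map sigmaXY) t
      have hint : ∀ (δ : ℝ), δ ∈ Ioo (0:ℝ) 1 → ∀ (b c : ℝ), b ∈ Ioo (0:ℝ) 1 →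
          c ∈ Ioo (0:ℝ) 1 →
          IntervalIntegrable (fun t => sigmaXY a t * chenL δ (w.map sigmaXY) t) volume b c := by
        intro δ hδ b c hb hc
        exact (((sigma_contOn a).mul (chen_contOn w hδ)).mono
          (uIcc_subset_I01 hb hc)).intervalIntegrable
      calc (∫ t in ε..s, sigmaXY a t * chenL ε (w.map sigmaXY) t)
          ≤ ∫ t in ε..s, sigmaXY a t * chenL ε' (w.map sigmaXY) t := by
            refine intervalIntegral.integral_mono_on hεs (hint ε hε ε s hε hsI)
              (hint ε' hε' ε s hε hsI) (fun u hu => ?_)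
            have huI : u ∈ Ioo (0:ℝ) 1 := ⟨lt_of_lt_of_le hε.1 hu.1, lt_of_le_of_lt hu.2 hs1⟩
            exact mul_le_mul_of_nonneg_left (IH hε' hεε hu.1 huI.2) (sigma_pos a huI).le
        _ ≤ ∫ t in ε'..s, sigmaXY a t * chenL ε' (w.map sigmaXY) t := by
            refine intervalIntegral.integral_mono_interval hεε hεs le_rfl ?_
              (hint ε' hε' ε' s hε' hsI)
            refine Filter.eventually_of_mem (self_mem_ae_restrict measurableSet_Ioc)
              (fun u hu => ?_)
            have huI : u ∈ Ioo (0:ℝ) 1 := ⟨lt_of_lt_of_le hε'.1 hu.1.le, lt_of_le_of_lt hu.2 hs1⟩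
            exact mul_nonneg (sigma_pos a huI).le (chen_nonneg w hε' hu.1.le huI.2)

lemma semi_tail {a : XY} {u : List XY} (h : SemiWordXY (a :: u)) : SemiWordXY u := by
  cases u with
  | nil => intro b hb; simp at hb
  | cons c v => intro b hb; exact h b (by rwa [List.getLast?_cons_cons])

lemma chen_bound {z : ℝ} (hz : z ∈ Ioo (0:ℝ) 1) :
    ∀ w : List XY, SemiWordXY w → w ≠ [] →
    ∃ M : ℝ, 0 ≤ M ∧ ∀ {ε s : ℝ}, ε ∈ Ioo (0:ℝ) 1 → ε ≤ s → s ≤ z →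
      chenL ε (w.map sigmaXY) s ≤ M * s := by
  have hz1 : (0:ℝ) < 1 - z := by linarith [hz.2]
  intro w
  induction w with
  | nil => intro _ h; exact absurd rfl h
  | cons a w IH =>
      intro hw _
      -- integrability helper
      have hint : ∀ (c : XY) (u : List XY) {δ b s : ℝ}, δ ∈ Ioo (0:ℝ) 1 → b ∈ Ioo (0:ℝ) 1 →
          s ∈ Ioo (0:ℝ) 1 →
          IntervalIntegrable (fun t => sigmaXY c t * chenL δ (u.map sigmaXY) t) volume b s :=
        fun c u {δ b s} hδ hb hs => (((sigma_contOn c).mul (chen_contOn u hδ)).mono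
          (uIcc_subset_I01 hb hs)).intervalIntegrable
      cases w with
      | nil =>
          have ha : a = XY.y := hw a rfl
          subst ha
          refine ⟨1 / (1 - z), by positivity, ?_⟩
          intro ε s hε hεs hsz
          have hs1 : s < 1 := lt_of_le_of_lt hsz hz.2
          have hsI : s ∈ Ioo (0:ℝ) 1 := ⟨lt_of_lt_of_le hε.1 hεs, hs1⟩
          show (∫ t in ε..s, sigmaXY XY.y t * chenL ε ([].map sigmaXY) t) ≤ 1 / (1 - z) * s
          calc (∫ t in ε..s, sigmaXY XY.y t * chenL ε ([].map sigmaXY) t)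
              ≤ ∫ _t in ε..s, 1 / (1 - z) := by
                refine intervalIntegral.integral_mono_on hεs (hint XY.y [] hε hε hsI)
                  intervalIntegrable_const (fun u hu => ?_)
                have hu1 : u ≤ z := le_trans hu.2 hsz
                have : sigmaXY XY.y u ≤ 1 / (1 - z) := by
                  simp only [sigmaXY]
                  exact one_div_le_one_div_of_le hz1 (by linarith)
                simpa [chenL] using this
            _ = (s - ε) * (1 / (1 - z)) := by simp
            _ ≤ 1 / (1 - z) * s := by
                rw [mul_comm]
                have : (0:ℝ) ≤ 1 / (1-z) := by positivity
                nlinarith [hε.1]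
      | cons b w' =>
          obtain ⟨M₁, hM₁0, hM₁⟩ := IH (semi_tail hw) (List.cons_ne_nil _ _)
          refine ⟨M₁ + M₁ / (1 - z), by positivity, ?_⟩
          intro ε s hε hεs hsz
          have hs1 : s < 1 := lt_of_le_of_lt hsz hz.2
          have hs0 : 0 < s := lt_of_lt_of_le hε.1 hεs
          have hsI : s ∈ Ioo (0:ℝ) 1 := ⟨hs0, hs1⟩
          have key : ∀ (C : ℝ), 0 ≤ C →
              (∀ u, u ∈ Icc ε s → sigmaXY a u * chenL ε ((b :: w').map sigmaXY) u ≤ C) →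
              (∫ t in ε..s, sigmaXY a t * chenL ε ((b :: w').map sigmaXY) t) ≤ (s - ε) * C := by
            intro C hC0 hC
            calc (∫ t in ε..s, sigmaXY a t * chenL ε ((b :: w').map sigmaXY) t)
                ≤ ∫ _t in ε..s, C := intervalIntegral.integral_mono_on hεs
                    (hint a (b :: w') hε hε hsI) intervalIntegrable_const hC
              _ = (s - ε) * C := by simp
          show (∫ t in ε..s, sigmaXY a t * chenL ε ((b :: w').map sigmaXY) t) ≤ _
          have hchen : ∀ u, u ∈ Icc ε s → chenL ε ((b :: w').map sigmaXY) u ≤ M₁ * u :=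
            fun u hu => hM₁ hε hu.1 (le_trans hu.2 hsz)
          have hchen0 : ∀ u, u ∈ Icc ε s → 0 ≤ chenL ε ((b :: w').map sigmaXY) u :=
            fun u hu => chen_nonneg _ hε hu.1 (lt_of_le_of_lt (le_trans hu.2 hsz) hz.2)
          cases a with
          | x =>
              have : (∫ t in ε..s, sigmaXY XY.x t * chenL ε ((b :: w').map sigmaXY) t) ≤ M₁ * s := by
                refine le_trans (key M₁ hM₁0 ?_) (by nlinarith [hε.1])
                intro u hu
                have hu0 : 0 < u := lt_of_lt_of_le hε.1 hu.1
                have : sigmaXY XY.x u * chenL ε ((b :: w').map sigmaXY) u ≤ (1/u) * (M₁ * u) := by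
                  simp only [sigmaXY]
                  exact mul_le_mul_of_nonneg_left (hchen u hu) (by positivity)
                calc sigmaXY XY.x u * chenL ε ((b :: w').map sigmaXY) u ≤ (1/u) * (M₁ * u) := this
                  _ = M₁ := by field_simp
              refine le_trans this ?_
              have : (0:ℝ) ≤ M₁ / (1 - z) * s := by positivity
              nlinarith
          | y =>
              have : (∫ t in ε..s, sigmaXY XY.y t * chenL ε ((b :: w').map sigmaXY) t)
                  ≤ 1 / (1-z) * (M₁ * s) := by
                have hC0 : (0:ℝ) ≤ 1 / (1-z) * (M₁ * s) := by positivity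
                refine le_trans (key (1 / (1-z) * (M₁ * s)) hC0 ?_)
                  (by nlinarith [hε.1, hε.2])
                intro u hu
                have hu0 : 0 < u := lt_of_lt_of_le hε.1 hu.1
                have huz : u ≤ z := le_trans hu.2 hsz
                have h1 : sigmaXY XY.y u ≤ 1 / (1 - z) := by
                  simp only [sigmaXY]
                  exact one_div_le_one_div_of_le hz1 (by linarith)
                have h2 : chenL ε ((b :: w').map sigmaXY) u ≤ M₁ * s :=
                  le_trans (hchen u hu) (by nlinarith [hu.2])
                exact mul_le_mul h1 h2 (hchen0 u hu) (by positivity)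
              refine le_trans this ?_
              have h3 : 1 / (1-z) * (M₁ * s) = M₁ / (1-z) * s := by ring
              nlinarith
lemma chen_exists_lim (w : List XY) (hw : SemiWordXY w) {z : ℝ} (hz : z ∈ Ioo (0:ℝ) 1) :
    ∃ L : ℝ, Tendsto (fun ε => chenL ε (w.map sigmaXY) z) (nhdsWithin 0 (Set.Ioi 0)) (𝓝 L) := by
  rcases eq_or_ne w [] with rfl | hne
  · exact ⟨1, by simpa [chenL] using tendsto_const_nhds⟩
  obtain ⟨M, hM0, hM⟩ := chen_bound hz w hw hne
  have hmono : AntitoneOn (fun ε => chenL ε (w.map sigmaXY) z) (Ioo 0 z) := by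
    intro ε₁ h1 ε₂ h2 h12
    exact chen_antitone w ⟨h1.1, lt_trans h1.2 hz.2⟩ h12 h2.2.le hz.2
  have hbdd : BddAbove ((fun ε => chenL ε (w.map sigmaXY) z) '' Ioo 0 z) := by
    refine ⟨M * z, fun r hr => ?_⟩
    obtain ⟨ε, hε, rfl⟩ := hr
    exact hM ⟨hε.1, lt_trans hε.2 hz.2⟩ hε.2.le le_rfl
  exact ⟨_, hmono.tendsto_nhdsWithin_Ioo_right ⟨z/2, by constructor <;> nlinarith [hz.1]⟩
    hbdd⟩

lemma Li_tendsto (w : List XY) (hw : SemiWordXY w) {z : ℝ} (hz : z ∈ Ioo (0:ℝ) 1) :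
    Tendsto (fun ε => chenL ε (w.map sigmaXY) z) (nhdsWithin 0 (Set.Ioi 0)) (𝓝 (LiW w z)) := by
  obtain ⟨L, hL⟩ := chen_exists_lim w hw hz
  rcases eq_or_ne w [] with rfl | hne
  · simpa [chenL, LiW] using (tendsto_const_nhds : Tendsto (fun _ : ℝ => (1:ℝ)) _ _)
  · have : LiW w z = L := by
      rw [LiW, if_neg hne, if_neg (ne_of_gt hz.1)]
      exact hL.limUnder_eq
    rwa [this]

noncomputable def chenAlg (ε : ℝ) (X : WAlg XY) (s : ℝ) : ℝ :=
  X.sum fun w c => c * chenL ε (w.map sigmaXY) s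

lemma chenAlg_wdelta (ε s : ℝ) (w : List XY) :
    chenAlg ε (wdelta w) s = chenL ε (w.map sigmaXY) s := by
  rw [chenAlg, wdelta, Finsupp.sum_single_index (by simp), one_mul]

lemma chenAlg_add (ε s : ℝ) (X Y : WAlg XY) :
    chenAlg ε (X + Y) s = chenAlg ε X s + chenAlg ε Y s :=
  Finsupp.sum_add_index' (fun _ => zero_mul _) (fun _ c c' => add_mul c c' _)

lemma chenAlg_contOn (X : WAlg XY) {ε : ℝ} (hε : ε ∈ Ioo (0:ℝ) 1) :
    ContinuousOn (chenAlg ε X) (Ioo (0:ℝ) 1) := by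
  have : chenAlg ε X = fun s => ∑ w ∈ X.support, X w * chenL ε (w.map sigmaXY) s := rfl
  rw [this]
  exact continuousOn_finset_sum _ (fun w _ => continuousOn_const.mul (chen_contOn w hε))

lemma chenAlg_mapDomain (c : XY) (X : WAlg XY) {ε s : ℝ} (hε : ε ∈ Ioo (0:ℝ) 1)
    (hs : s ∈ Ioo (0:ℝ) 1) :
    chenAlg ε (Finsupp.mapDomain (c :: ·) X) s = ∫ t in ε..s, sigmaXY c t * chenAlg ε X t := by
  rw [chenAlg, Finsupp.sum_mapDomain_index (fun w => zero_mul (chenL ε (w.map sigmaXY) s))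
    (fun w c₁ c₂ => add_mul c₁ c₂ (chenL ε (w.map sigmaXY) s))]
  rw [Finsupp.sum]
  calc ∑ w ∈ X.support, X w * chenL ε ((c :: w).map sigmaXY) s
      = ∑ w ∈ X.support, ∫ t in ε..s, X w * (sigmaXY c t * chenL ε (w.map sigmaXY) t) := by
        refine Finset.sum_congr rfl fun w _ => ?_
        rw [intervalIntegral.integral_const_mul]
        rfl
    _ = ∫ t in ε..s, ∑ w ∈ X.support, X w * (sigmaXY c t * chenL ε (w.map sigmaXY) t) := by
        refine (intervalIntegral.integral_finset_sum (fun w _ => ?_)).symm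
        exact ((continuousOn_const.mul ((sigma_contOn c).mul (chen_contOn w hε))).mono
          (uIcc_subset_I01 hε hs)).intervalIntegrable
    _ = ∫ t in ε..s, sigmaXY c t * chenAlg ε X t := by
        refine intervalIntegral.integral_congr fun t _ => ?_
        rw [chenAlg, Finsupp.sum, Finset.mul_sum]
        exact Finset.sum_congr rfl fun w _ => by ring

lemma chenAlg_mapDomain_hasDerivAt (c : XY) (X : WAlg XY) {ε s : ℝ}
    (hε : ε ∈ Ioo (0:ℝ) 1) (hs : s ∈ Ioo (0:ℝ) 1) :
    HasDerivAt (chenAlg ε (Finsupp.mapDomain (c :: ·) X)) (sigmaXY c s * chenAlg ε X s) s := by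
  have hD := primitive_hasDerivAt hε ((sigma_contOn c).mul (chenAlg_contOn X hε)) hs
  refine HasDerivAt.congr_of_eventuallyEq hD ?_
  filter_upwards [isOpen_Ioo.mem_nhds hs] with u hu
  exact chenAlg_mapDomain c X hε hu

lemma const_of_deriv_zero {F : ℝ → ℝ} (hF : ∀ s ∈ Ioo (0:ℝ) 1, HasDerivAt F 0 s)
    {a b : ℝ} (ha : a ∈ Ioo (0:ℝ) 1) (hb : b ∈ Ioo (0:ℝ) 1) : F a = F b := by
  refine Convex.is_const_of_fderivWithin_eq_zero (convex_Ioo 0 1)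
    (fun s hs => (hF s hs).differentiableAt.differentiableWithinAt) (fun s hs => ?_) ha hb
  rw [fderivWithin_of_isOpen isOpen_Ioo hs, (hF s hs).hasFDerivAt.fderiv]
  ext
  simp

theorem chen_shuffle : ∀ (u v : List XY) (ε : ℝ), ε ∈ Ioo (0:ℝ) 1 → ∀ s ∈ Ioo (0:ℝ) 1,
    chenAlg ε (shw (fun a _ : XY => a) 0 u v) s
      = chenL ε (u.map sigmaXY) s * chenL ε (v.map sigmaXY) s
  | [], v, ε, hε, s, hs => by
      rw [shw, chenAlg_wdelta]
      simp [chenL]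
  | a :: u, [], ε, hε, s, hs => by
      rw [shw, chenAlg_wdelta]
      simp [chenL]
  | a :: u, b :: v, ε, hε, s, hs => by
      have IH1 := chen_shuffle u (b :: v) ε hε
      have IH2 := chen_shuffle (a :: u) v ε hε
      set M : XY → XY → XY := (fun a _ : XY => a) with hM
      set X1 := shw M 0 u (b :: v) with hX1
      set X2 := shw M 0 (a :: u) v with hX2
      have hshw : shw M 0 (a :: u) (b :: v) =
          Finsupp.mapDomain (a :: ·) X1 + Finsupp.mapDomain (b :: ·) X2 := by
        rw [shw]; simp; rfl
      set F : ℝ → ℝ := fun t => chenAlg ε (shw M 0 (a :: u) (b :: v)) t -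
        chenL ε ((a :: u).map sigmaXY) t * chenL ε ((b :: v).map sigmaXY) t with hF
      have hderiv : ∀ t ∈ Ioo (0:ℝ) 1, HasDerivAt F 0 t := by
        intro t ht
        have d1 := chenAlg_mapDomain_hasDerivAt a X1 hε ht
        have d2 := chenAlg_mapDomain_hasDerivAt b X2 hε ht
        have dA : HasDerivAt (chenAlg ε (shw M 0 (a :: u) (b :: v)))
            (sigmaXY a t * chenAlg ε X1 t + sigmaXY b t * chenAlg ε X2 t) t := by
          rw [hshw]
          have heq : chenAlg ε (Finsupp.mapDomain (a :: ·) X1 + Finsupp.mapDomain (b :: ·) X2)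
              = fun r => chenAlg ε (Finsupp.mapDomain (a :: ·) X1) r +
                chenAlg ε (Finsupp.mapDomain (b :: ·) X2) r :=
            funext fun r => chenAlg_add ε r _ _
          rw [heq]
          exact d1.add d2
        have dB := (chen_hasDerivAt a u hε ht).mul (chen_hasDerivAt b v hε ht)
        have dF := dA.sub dB
        convert dF using 1
        case e'_4 => rfl
        case e'_5 => rfl
        case e'_8 => rfl
        rw [IH1 t ht, IH2 t ht]
        ring
      have hFε : F ε = 0 := by
        rw [hF]
        simp only [hshw, chenAlg_add, chenAlg_mapDomain a X1 hε hε, chenAlg_mapDomain b X2 hε hε]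
        simp [chen_self]
      have hFs : F s = 0 := by rw [const_of_deriv_zero hderiv hs hε, hFε]
      exact sub_eq_zero.mp hFs
termination_by u v => u.length + v.length
decreasing_by all_goals (simp; try omega)

lemma semi_cons {c : XY} {q : List XY} (h : SemiWordXY q) (hne : q ≠ []) :
    SemiWordXY (c :: q) := by
  cases q with
  | nil => exact absurd rfl hne
  | cons d q' => intro b hb; rw [List.getLast?_cons_cons] at hb; exact h b hb

theorem shw_support : ∀ (u v p : List XY), p ∈ (shw (fun a _ : XY => a) 0 u v).support →
    p.length = u.length + v.length ∧ (SemiWordXY u → SemiWordXY v → SemiWordXY p)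
  | [], v, p, hp => by
      rw [shw] at hp
      have hpv : p = v := by
        have := Finsupp.support_single_subset hp
        simpa using this
      subst hpv
      exact ⟨by simp, fun _ hv => hv⟩
  | a :: u, [], p, hp => by
      rw [shw] at hp
      have hpv : p = a :: u := by
        have := Finsupp.support_single_subset hp
        simpa using this
      subst hpv
      exact ⟨by simp, fun hu _ => hu⟩
  | a :: u, b :: v, p, hp => by
      rw [shw] at hp
      simp only [zero_smul, add_zero] at hp
      rcases Finset.mem_union.mp (Finsupp.support_add hp) with hm | hm
      · obtain ⟨q, hq, rfl⟩ := Finset.mem_image.mp (Finsupp.mapDomain_support hm)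
        obtain ⟨hlen, hsemi⟩ := shw_support u (b :: v) q hq
        refine ⟨by simp [hlen]; omega, fun h1 h2 => ?_⟩
        refine semi_cons (hsemi (semi_tail h1) h2) ?_
        intro hq0
        rw [hq0] at hlen
        simp at hlen
      · obtain ⟨q, hq, rfl⟩ := Finset.mem_image.mp (Finsupp.mapDomain_support hm)
        obtain ⟨hlen, hsemi⟩ := shw_support (a :: u) v q hq
        refine ⟨by simp [hlen]; omega, fun h1 h2 => ?_⟩
        refine semi_cons (hsemi h1 (semi_tail h2)) ?_
        intro hq0
        rw [hq0] at hlen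
        simp at hlen; omega
termination_by u v => u.length + v.length
decreasing_by all_goals (simp; try omega)

lemma nil_notin_range_cons (c : XY) : ([] : List XY) ∉ Set.range (c :: ·) := by
  rintro ⟨l, hl⟩
  simp at hl

theorem shw_apply_nil : ∀ (u v : List XY), (shw (fun a _ : XY => a) 0 u v) [] =
    (if u = [] then (1:ℝ) else 0) * (if v = [] then (1:ℝ) else 0)
  | [], v => by
      rw [shw]
      simp [wdelta, Finsupp.single_apply, eq_comm]
  | a :: u, [] => by
      rw [shw]
      simp [wdelta, Finsupp.single_apply]
  | a :: u, b :: v => by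
      rw [shw]
      simp [Finsupp.add_apply, Finsupp.mapDomain_notin_range _ _ (nil_notin_range_cons a),
        Finsupp.mapDomain_notin_range _ _ (nil_notin_range_cons b)]

lemma LiWAlg_zero (X : WAlg XY) : LiWAlg X 0 = X [] := by
  rw [LiWAlg]
  rw [show (fun (p : List XY) (c : ℝ) => c • LiW p 0)
      = fun p c => if p = [] then c else 0 from funext fun p => funext fun c => by
    by_cases hp : p = [] <;> simp [LiW, hp]]
  exact Finsupp.sum_ite_self_eq' X []

end StatementTwelveAux

/-- **Statement 12** (Proposition `prop:polylogs_shuffle_mor`).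
The multiple polylogarithm map is an algebra morphism for the shuffle product: for all
semiconvergent words `w, w'` and every `z ∈ [0,1)`,
`Li_{w ⧢ w'}(z) = Li_w(z)·Li_{w'}(z)`. -/
theorem statement12 (w w' : List XY) (h : SemiWordXY w) (h' : SemiWordXY w')
    (z : ℝ) (hz : z ∈ Set.Ico (0 : ℝ) 1) :
    LiWAlg (shw (fun a _ : XY => a) 0 w w') z = LiW w z * LiW w' z := by
  open Set MeasureTheory intervalIntegral Filter Topology in
  rcases eq_or_lt_of_le hz.1 with hz0 | hz0
  · -- z = 0
    rw [← hz0, LiWAlg_zero, shw_apply_nil]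
    by_cases hw : w = [] <;> by_cases hw' : w' = [] <;> simp [LiW, hw, hw']
  · -- z ∈ (0, 1)
    have hzI : z ∈ Ioo (0:ℝ) 1 := ⟨hz0, hz.2⟩
    set X := shw (fun a _ : XY => a) 0 w w' with hX
    have h1 : Tendsto (fun ε => chenAlg ε X z) (𝓝[>] (0:ℝ)) (𝓝 (LiWAlg X z)) := by
      have e1 : LiWAlg X z = ∑ p ∈ X.support, X p * LiW p z := by
        simp [LiWAlg, Finsupp.sum, smul_eq_mul]
      have e2 : (fun ε => chenAlg ε X z)
          = fun ε => ∑ p ∈ X.support, X p * chenL ε (p.map sigmaXY) z := rfl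
      rw [e1, e2]
      exact tendsto_finset_sum _ (fun p hp =>
        (Li_tendsto p ((shw_support w w' p hp).2 h h') hzI).const_mul _)
    have h2 : Tendsto (fun ε => chenAlg ε X z) (𝓝[>] (0:ℝ)) (𝓝 (LiW w z * LiW w' z)) := by
      have hev : (fun ε => chenAlg ε X z) =ᶠ[𝓝[>] (0:ℝ)]
          fun ε => chenL ε (w.map sigmaXY) z * chenL ε (w'.map sigmaXY) z := by
        filter_upwards [Ioo_mem_nhdsGT_of_mem (Set.left_mem_Ico.mpr hz0)] with ε hε
        exact chen_shuffle w w' ε ⟨hε.1, hε.2.trans hz.2⟩ z hzI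
      exact Tendsto.congr' hev.symm ((Li_tendsto w h hzI).mul (Li_tendsto w' h' hzI))
    exact tendsto_nhds_unique h1 h2
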